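/- Componentwise error decomposition for API: if π_{k+1} is greedy w.r.t. v_k = v_{π_{k,m}} + ε_k, then v_* − v_{π_{k+1,m}} ≤ γ P_{π_*}(v_* − v_{π_{k,m}}) + γ(P_{π_{k+1}} − P_{π_*}) ε_k + Γ_{k+1,m}(v_{π'_{k,m}} − v_{π_{k+1,m}}) componentwise, where π'_{k,m} is the 1-step right rotation of π_{k,m} (i.e., v_{π'_{k,m}} = T_{π_{k−m+1}} v_{π_{k,m}}). -/
import Mathlib


open Finset Filter

variable {S A : Type*} [Fintype S] [Nonempty S] [DecidableEq S] [Fintype A] [Nonempty A]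

/-- `P s a s'` is the probability of moving to `s'` when taking action `a` in state `s`. -/
def IsStochastic (P : S → A → S → ℝ) : Prop :=
  (∀ s a s', 0 ≤ P s a s') ∧ ∀ s a, ∑ s', P s a s' = 1

/-- Bellman operator `T_π` of a stationary deterministic policy `π`. -/
noncomputable def Tpol (P : S → A → S → ℝ) (r : S → A → ℝ) (γ : ℝ)
    (π : S → A) (v : S → ℝ) : S → ℝ :=
  fun s => r s (π s) + γ * ∑ s', P s (π s) s' * v s'

/-- Bellman optimality operator `T`. -/
noncomputable def Topt (P : S → A → S → ℝ) (r : S → A → ℝ) (γ : ℝ) (v : S → ℝ) : S → ℝ :=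
  fun s => univ.sup' univ_nonempty (fun a => r s a + γ * ∑ s', P s a s' * v s')

/-- Application of the transition matrix `P_π` to a value function. -/
noncomputable def Pap (P : S → A → S → ℝ) (π : S → A) (v : S → ℝ) : S → ℝ :=
  fun s => ∑ s', P s (π s) s' * v s'

/-- `Tcomp P r γ πs k m = T_{π_k} T_{π_{k-1}} ⋯ T_{π_{k-m+1}}`. -/
noncomputable def Tcomp (P : S → A → S → ℝ) (r : S → A → ℝ) (γ : ℝ)
    (πs : ℕ → S → A) : ℕ → ℕ → (S → ℝ) → (S → ℝ)
  | _, 0, v => v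
  | k, m+1, v => Tpol P r γ (πs k) (Tcomp P r γ πs (k-1) m v)

/-- `Gap P γ πs k m = (γP_{π_k})(γP_{π_{k-1}})⋯(γP_{π_{k-m+1}})` applied to a value function. -/
noncomputable def Gap (P : S → A → S → ℝ) (γ : ℝ)
    (πs : ℕ → S → A) : ℕ → ℕ → (S → ℝ) → (S → ℝ)
  | _, 0, v => v
  | k, m+1, v => γ • Pap P (πs k) (Gap P γ πs (k-1) m v)

lemma Tpol_sub (P : S → A → S → ℝ) (r : S → A → ℝ) (γ : ℝ) (π : S → A) (u v : S → ℝ) :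
    Tpol P r γ π u - Tpol P r γ π v = γ • Pap P π (u - v) := by
  funext s
  simp only [Pi.sub_apply, Pi.smul_apply, Tpol, Pap, smul_eq_mul, mul_sub,
    Finset.sum_sub_distrib]
  ring

lemma Tpol_add' (P : S → A → S → ℝ) (r : S → A → ℝ) (γ : ℝ) (π : S → A) (u ε : S → ℝ) (s : S) :
    Tpol P r γ π (u + ε) s = Tpol P r γ π u s + γ * Pap P π ε s := by
  simp only [Tpol, Pap, Pi.add_apply, mul_add, Finset.sum_add_distrib]
  ring

lemma Tcomp_sub (P : S → A → S → ℝ) (r : S → A → ℝ) (γ : ℝ) (πs : ℕ → S → A)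
    (u v : S → ℝ) : ∀ m k, Tcomp P r γ πs k m u - Tcomp P r γ πs k m v
      = Gap P γ πs k m (u - v) := by
  intro m
  induction m with
  | zero => intro k; rfl
  | succ m ih =>
    intro k
    show Tpol P r γ (πs k) _ - Tpol P r γ (πs k) _ = γ • Pap P (πs k) _
    rw [Tpol_sub, ih]

lemma Tcomp_succ_right (P : S → A → S → ℝ) (r : S → A → ℝ) (γ : ℝ) (πs : ℕ → S → A)
    (v : S → ℝ) : ∀ m k, Tcomp P r γ πs k (m + 1) v
      = Tcomp P r γ πs k m (Tpol P r γ (πs (k - m)) v) := by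
  intro m
  induction m with
  | zero => intro k; rfl
  | succ m ih =>
    intro k
    show Tpol P r γ (πs k) (Tcomp P r γ πs (k-1) (m+1) v) = _
    rw [ih (k - 1)]
    have : k - 1 - m = k - (m + 1) := by omega
    rw [this]
    rfl

/-- Componentwise error decomposition for API:
`v_* − v_{π_{k+1,m}} ≤ γP_{π_*}(v_* − v_{π_{k,m}}) + γ(P_{π_{k+1}} − P_{π_*})ε_k
  + Γ_{k+1,m}(v_{π'_{k,m}} − v_{π_{k+1,m}})` with `v_{π'_{k,m}} = T_{π_{k−m+1}} v_{π_{k,m}}`. -/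
theorem api_componentwise_decomposition (P : S → A → S → ℝ) (r : S → A → ℝ) (γ : ℝ)
    (hP : IsStochastic P) (hγ0 : 0 < γ) (hγ1 : γ < 1)
    (πs : ℕ → S → A) (k m : ℕ) (hm : 1 ≤ m) (hk : m ≤ k)
    (pistar : S → A) (vstar : S → ℝ)
    (hstar : Tpol P r γ pistar vstar = vstar) (hstaropt : Topt P r γ vstar = vstar)
    (vkm vk1m εk : S → ℝ)
    (hfix : Tcomp P r γ πs k m vkm = vkm)
    (hfix' : Tcomp P r γ πs (k+1) m vk1m = vk1m)
    (hgreedy : Tpol P r γ (πs (k+1)) (vkm + εk) = Topt P r γ (vkm + εk)) :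
    ∀ s, vstar s - vk1m s ≤
      γ * Pap P pistar (vstar - vkm) s
      + γ * (Pap P (πs (k+1)) εk s - Pap P pistar εk s)
      + Gap P γ πs (k+1) m (Tpol P r γ (πs (k - m + 1)) vkm - vk1m) s := by
  intro s
  -- Term 1
  have h1 : Tpol P r γ pistar vstar s - Tpol P r γ pistar vkm s
      = γ * Pap P pistar (vstar - vkm) s := by
    have := congrFun (Tpol_sub P r γ pistar vstar vkm) s
    simpa using this
  -- Term 2
  have h2 : Tpol P r γ pistar vkm s - Tpol P r γ (πs (k+1)) vkm s
      ≤ γ * (Pap P (πs (k+1)) εk s - Pap P pistar εk s) := by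
    have hle : Tpol P r γ pistar (vkm + εk) s ≤ Tpol P r γ (πs (k+1)) (vkm + εk) s := by
      rw [hgreedy]
      exact Finset.le_sup' (fun a => r s a + γ * ∑ s', P s a s' * (vkm + εk) s')
        (Finset.mem_univ (pistar s))
    rw [Tpol_add', Tpol_add'] at hle
    nlinarith [hle]
  -- Term 3
  have h3 : Tpol P r γ (πs (k+1)) vkm s - vk1m s
      = Gap P γ πs (k+1) m (Tpol P r γ (πs (k - m + 1)) vkm - vk1m) s := by
    have e1 : Tpol P r γ (πs (k+1)) vkm = Tcomp P r γ πs (k+1) (m+1) vkm := by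
      show _ = Tpol P r γ (πs (k+1)) (Tcomp P r γ πs (k+1-1) m vkm)
      simp [hfix]
    have e2 : Tcomp P r γ πs (k+1) (m+1) vkm
        = Tcomp P r γ πs (k+1) m (Tpol P r γ (πs (k - m + 1)) vkm) := by
      have hidx : k + 1 - m = k - m + 1 := by omega
      rw [Tcomp_succ_right, hidx]
    conv_lhs => rw [e1, e2, ← congrFun hfix' s]
    have := congrFun (Tcomp_sub P r γ πs (Tpol P r γ (πs (k - m + 1)) vkm) vk1m m (k+1)) s
    simpa using this
  have hv : vstar s = Tpol P r γ pistar vstar s := (congrFun hstar s).symm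
  linarith
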